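/- For every natural number n ≥ 2, ∑_{l=1}^{n-1} csc(πl/n) = −(1/n)·∑_{k=0}^{n-1} (2k+1)·cot(π(2k+1)/(2n)). -/

import Mathlib

open Real Finset

private lemma exp_double_sub_one (x : ℝ) :
    Complex.exp ((2 * x : ℝ) * Complex.I) - 1 =
      Complex.exp ((x : ℝ) * Complex.I) * (2 * (Real.sin x : ℂ) * Complex.I) := by
  have h2 : ((2 * x : ℝ) : ℂ) * Complex.I = (x : ℂ) * Complex.I + (x : ℂ) * Complex.I := by
    push_cast; ring
  rw [h2, Complex.exp_add, Complex.exp_mul_I, Complex.ofReal_sin]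
  linear_combination Complex.sin_sq_add_cos_sq (x : ℂ) - Complex.sin (x : ℂ) ^ 2 * Complex.I_sq

private lemma mul_geom_key (w : ℂ) (n : ℕ) :
    (w - 1) * ∑ k ∈ Finset.range n, (k : ℂ) * w ^ k
      = n * w ^ n - w * ∑ k ∈ Finset.range n, w ^ k := by
  induction n with
  | zero => simp
  | succ m ih =>
    rw [Finset.sum_range_succ, Finset.sum_range_succ, mul_add, ih]
    push_cast
    ring

private lemma sum_mul_geom (w : ℂ) (n : ℕ) (hw : w ≠ 1) (h1 : w ^ n = 1) :
    ∑ k ∈ Finset.range n, (k : ℂ) * w ^ k = n / (w - 1) := by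
  have hw0 : w - 1 ≠ 0 := sub_ne_zero.mpr hw
  have key := mul_geom_key w n
  rw [geom_sum_eq hw, h1] at key
  rw [eq_div_iff hw0]
  rw [sub_self, zero_div, mul_zero, sub_zero, mul_one] at key
  linear_combination key

-- Lemma A : csc (π l / n) as a sum of sines
private lemma lemA (n l : ℕ) (hl1 : 1 ≤ l) (hln : l < n) :
    (Real.sin (π * l / n))⁻¹ =
      -(1 / (n : ℝ)) * ∑ k ∈ Finset.range n,
        (2 * (k : ℝ) + 1) * Real.sin (π * (2 * k + 1) * l / n) := by
  have hn0 : (0 : ℝ) < n := by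
    have : 0 < n := lt_of_lt_of_le (Nat.lt_of_lt_of_le Nat.zero_lt_one hl1) hln.le
    exact_mod_cast this
  have hnC : (n : ℂ) ≠ 0 := by
    exact_mod_cast ne_of_gt hn0
  set φ : ℝ := π * l / n with hφ
  have hl0 : (0 : ℝ) < l := by exact_mod_cast hl1
  have hφpos : 0 < φ := div_pos (mul_pos Real.pi_pos hl0) hn0
  have hφlt : φ < π := by
    rw [hφ, div_lt_iff₀ hn0]
    have : (l : ℝ) < n := by exact_mod_cast hln
    nlinarith [Real.pi_pos]
  have hs : Real.sin φ > 0 := Real.sin_pos_of_pos_of_lt_pi hφpos hφlt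
  have hs0 : Real.sin φ ≠ 0 := ne_of_gt hs
  have hsC : ((Real.sin φ : ℝ) : ℂ) ≠ 0 := Complex.ofReal_ne_zero.mpr hs0
  set z : ℂ := Complex.exp ((φ : ℝ) * Complex.I) with hz
  set w : ℂ := z ^ 2 with hwdef
  have hw : w = Complex.exp ((2 * φ : ℝ) * Complex.I) := by
    rw [hwdef, hz, ← Complex.exp_nat_mul]
    norm_num
    ring_nf
  have hwsub : w - 1 = z * (2 * (Real.sin φ : ℂ) * Complex.I) := by
    rw [hw, hz, exp_double_sub_one]
  have hw0 : w - 1 ≠ 0 := by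
    rw [hwsub]
    exact mul_ne_zero (Complex.exp_ne_zero _)
      (mul_ne_zero (mul_ne_zero two_ne_zero hsC) Complex.I_ne_zero)
  have hw1 : w ≠ 1 := by
    intro h; exact hw0 (by rw [h, sub_self])
  have hwn : w ^ n = 1 := by
    rw [hw, ← Complex.exp_nat_mul]
    have : (n : ℂ) * (((2 * φ : ℝ) : ℂ) * Complex.I) = (l : ℂ) * (2 * (π : ℂ) * Complex.I) := by
      push_cast [hφ]
      field_simp
    rw [this, Complex.exp_nat_mul, Complex.exp_two_pi_mul_I, one_pow]
  have hgeom : ∑ k ∈ Finset.range n, w ^ k = 0 := by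
    rw [geom_sum_eq hw1, hwn, sub_self, zero_div]
  have hksum := sum_mul_geom w n hw1 hwn
  set K : ℂ := ∑ k ∈ Finset.range n, ((2 * (k : ℝ) + 1 : ℝ) : ℂ) * z ^ (2 * k + 1) with hK
  have hKform : K = z * (2 * (∑ k ∈ Finset.range n, (k : ℂ) * w ^ k)
      + ∑ k ∈ Finset.range n, w ^ k) := by
    rw [hK, mul_add, Finset.mul_sum, Finset.mul_sum, Finset.mul_sum, ← Finset.sum_add_distrib]
    apply Finset.sum_congr rfl
    intro k _
    rw [hwdef, pow_succ, pow_mul]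
    push_cast
    ring
  have hsC' : Complex.sin (φ : ℂ) ≠ 0 := by rw [← Complex.ofReal_sin]; exact hsC
  have hinv : Complex.sin (φ : ℂ) * (Complex.sin (φ : ℂ))⁻¹ = 1 := mul_inv_cancel₀ hsC'
  have hKval : K = ((-((n : ℝ) / Real.sin φ) : ℝ) : ℂ) * Complex.I := by
    have h1 : K * (w - 1) = 2 * n * z := by
      rw [hKform, hksum, hgeom]
      field_simp
      ring
    have h2 : (((-((n : ℝ) / Real.sin φ) : ℝ) : ℂ) * Complex.I) * (w - 1) = 2 * n * z := by
      rw [hwsub]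
      push_cast
      linear_combination (-2 * (n : ℂ) * z * Complex.I ^ 2) * hinv
        + (-2 * (n : ℂ) * z) * Complex.I_sq
    exact mul_right_cancel₀ hw0 (h1.trans h2.symm)
  -- take imaginary parts
  have him : (∑ k ∈ Finset.range n,
      (2 * (k : ℝ) + 1) * Real.sin (π * (2 * k + 1) * l / n)) = -((n : ℝ) / Real.sin φ) := by
    have := congrArg Complex.im hKval
    rw [hK] at this
    rw [Complex.im_sum] at this
    have hterm : ∀ k ∈ Finset.range n,
        (((2 * (k : ℝ) + 1 : ℝ) : ℂ) * z ^ (2 * k + 1)).im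
          = (2 * (k : ℝ) + 1) * Real.sin (π * (2 * k + 1) * l / n) := by
      intro k _
      have hzp : z ^ (2 * k + 1)
          = Complex.exp ((((2 * (k:ℝ) + 1) * φ : ℝ)) * Complex.I) := by
        rw [hz, ← Complex.exp_nat_mul]
        congr 1
        push_cast
        ring
      rw [hzp, Complex.im_ofReal_mul, Complex.exp_ofReal_mul_I_im]
      congr 2
      rw [hφ]
      field_simp
    rw [Finset.sum_congr rfl hterm] at this
    rw [this, Complex.mul_I_im, Complex.ofReal_re]
  rw [him]
  field_simp

-- Lemma B : sum of sines as a cotangent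
private lemma lemB (n k : ℕ) (hn : 2 ≤ n) (hk : k < n) :
    ∑ l ∈ Finset.Ico 1 n, Real.sin (π * (2 * k + 1) * l / n)
      = Real.cot (π * (2 * k + 1) / (2 * n)) := by
  have hn0 : (0 : ℝ) < n := by
    have : 0 < n := by omega
    exact_mod_cast this
  have hnC : (n : ℂ) ≠ 0 := by exact_mod_cast ne_of_gt hn0
  set h : ℝ := π * (2 * k + 1) / (2 * n) with hh
  have hpos : 0 < h := by positivity
  have hlt : h < π := by
    rw [hh, div_lt_iff₀ (by positivity)]
    have hkr : (k : ℝ) + 1 ≤ n := by exact_mod_cast hk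
    have h2 : 2 * (k : ℝ) + 1 < 2 * n := by linarith
    exact mul_lt_mul_of_pos_left h2 Real.pi_pos
  have hs : Real.sin h > 0 := Real.sin_pos_of_pos_of_lt_pi hpos hlt
  have hs0 : Real.sin h ≠ 0 := ne_of_gt hs
  have hsC : ((Real.sin h : ℝ) : ℂ) ≠ 0 := Complex.ofReal_ne_zero.mpr hs0
  have hsC' : Complex.sin (h : ℂ) ≠ 0 := by rw [← Complex.ofReal_sin]; exact hsC
  have hinv : Complex.sin (h : ℂ) * (Complex.sin (h : ℂ))⁻¹ = 1 := mul_inv_cancel₀ hsC'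
  set z : ℂ := Complex.exp ((2 * h : ℝ) * Complex.I) with hz
  have hzn : z ^ n = -1 := by
    rw [hz, ← Complex.exp_nat_mul]
    have : (n : ℂ) * (((2 * h : ℝ) : ℂ) * Complex.I)
        = ((2 * k + 1 : ℕ) : ℂ) * ((π : ℂ) * Complex.I) := by
      push_cast [hh]
      field_simp
    rw [this, Complex.exp_nat_mul, Complex.exp_pi_mul_I, Odd.neg_one_pow ⟨k, by omega⟩]
  have hz1 : z ≠ 1 := by
    intro hcon
    rw [hcon, one_pow] at hzn
    norm_num at hzn
  have hzsub : z - 1 = Complex.exp ((h : ℝ) * Complex.I) * (2 * (Real.sin h : ℂ) * Complex.I) := by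
    rw [hz, exp_double_sub_one]
  have hz0 : z - 1 ≠ 0 := by
    rw [hzsub]
    exact mul_ne_zero (Complex.exp_ne_zero _)
      (mul_ne_zero (mul_ne_zero two_ne_zero hsC) Complex.I_ne_zero)
  have claim : (1 + ((Real.cot h : ℝ) : ℂ) * Complex.I) * (z - 1) = -2 := by
    rw [hzsub, Real.cot_eq_cos_div_sin, Complex.exp_mul_I]
    push_cast
    linear_combination (2 * Complex.sin (h:ℂ) ^ 2
        + 2 * Complex.cos (h:ℂ) ^ 2 * Complex.sin (h:ℂ) * (Complex.sin (h:ℂ))⁻¹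
        + 2 * Complex.cos (h:ℂ) * Complex.sin (h:ℂ) ^ 2 * (Complex.sin (h:ℂ))⁻¹ * Complex.I)
          * Complex.I_sq
      + (-2 * Complex.cos (h:ℂ) ^ 2 - 2 * Complex.cos (h:ℂ) * Complex.sin (h:ℂ) * Complex.I)
          * hinv
      - 2 * Complex.sin_sq_add_cos_sq (h : ℂ)
  have hS : ∑ l ∈ Finset.range n, z ^ l = 1 + ((Real.cot h : ℝ) : ℂ) * Complex.I := by
    rw [geom_sum_eq hz1, hzn]
    rw [div_eq_iff hz0]
    linear_combination -claim
  have him : ∑ l ∈ Finset.range n, Real.sin (π * (2 * k + 1) * l / n) = Real.cot h := by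
    have := congrArg Complex.im hS
    rw [Complex.im_sum] at this
    have hterm : ∀ l ∈ Finset.range n,
        (z ^ l).im = Real.sin (π * (2 * k + 1) * l / n) := by
      intro l _
      have hzp : z ^ l = Complex.exp (((π * (2 * k + 1) * l / n : ℝ)) * Complex.I) := by
        rw [hz, ← Complex.exp_nat_mul]
        congr 1
        push_cast [hh]
        field_simp
      rw [hzp, Complex.exp_ofReal_mul_I_im]
    rw [Finset.sum_congr rfl hterm] at this
    rw [this, Complex.add_im, Complex.one_im, Complex.mul_I_im, Complex.ofReal_re, zero_add]
  rw [← him, Finset.range_eq_Ico, Finset.sum_eq_sum_Ico_succ_bot (by omega : 0 < n)]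
  norm_num

theorem csc_sum_eq_odd_cot_sum (n : ℕ) (hn : 2 ≤ n) :
    ∑ l ∈ Finset.Ico 1 n, (Real.sin (π * l / n))⁻¹ =
      -(1 / (n : ℝ)) * ∑ k ∈ Finset.range n,
        (2 * (k : ℝ) + 1) * Real.cot (π * (2 * k + 1) / (2 * n)) := by
  have hrw : ∀ k ∈ Finset.range n,
      (2 * (k : ℝ) + 1) * Real.cot (π * (2 * k + 1) / (2 * n))
        = ∑ l ∈ Finset.Ico 1 n, (2 * (k : ℝ) + 1) * Real.sin (π * (2 * k + 1) * l / n) := by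
    intro k hk
    rw [← lemB n k hn (Finset.mem_range.mp hk), Finset.mul_sum]
  rw [Finset.sum_congr rfl hrw, Finset.sum_comm, Finset.mul_sum]
  apply Finset.sum_congr rfl
  intro l hl
  obtain ⟨h1, h2⟩ := Finset.mem_Ico.mp hl
  exact lemA n l h1 h2
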